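/- Let u, v, w be three unit vectors in a real inner product space. Then √(1 − ⟨u,v⟩²) + √(1 − ⟨v,w⟩²) ≥ √(1 − ⟨u,w⟩²). (In words: the sum of the absolute values of the sines of any two inter-angles of three unit vectors is at least the absolute value of the sine of the third inter-angle.) -/

import Mathlib

set_option maxHeartbeats 1600000 in
/-- Lemma 2 of the paper (spherical triangle inequality for sines): for three
unit vectors `u, v, w` in a real inner product space, the sum of the sines of
two of the inter-angles dominates the sine of the third, where for unit vectors
`a, b` the absolute value of the sine of their inter-angle is `√(1 - ⟪a,b⟫²)`. -/
theorem sineTriangleReal {E : Type*} [NormedAddCommGroup E] [InnerProductSpace ℝ E]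
    (u v w : E) (hu : ‖u‖ = 1) (hv : ‖v‖ = 1) (hw : ‖w‖ = 1) :
    Real.sqrt (1 - (inner ℝ u v : ℝ) ^ 2) + Real.sqrt (1 - (inner ℝ v w : ℝ) ^ 2) ≥
      Real.sqrt (1 - (inner ℝ u w : ℝ) ^ 2) := by
  set a : ℝ := inner ℝ u v with hA
  set b : ℝ := inner ℝ v w with hB
  set c : ℝ := inner ℝ u w with hC
  have huu : (inner ℝ u u : ℝ) = 1 := by
    rw [real_inner_self_eq_norm_sq, hu]; norm_num
  have hvv : (inner ℝ v v : ℝ) = 1 := by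
    rw [real_inner_self_eq_norm_sq, hv]; norm_num
  have hww : (inner ℝ w w : ℝ) = 1 := by
    rw [real_inner_self_eq_norm_sq, hw]; norm_num
  have ha : a ^ 2 ≤ 1 := by
    have := real_inner_mul_inner_self_le u v
    rw [huu, hvv] at this; nlinarith [this]
  have hb : b ^ 2 ≤ 1 := by
    have := real_inner_mul_inner_self_le v w
    rw [hvv, hww] at this; nlinarith [this]
  have hc : c ^ 2 ≤ 1 := by
    have := real_inner_mul_inner_self_le u w
    rw [huu, hww] at this; nlinarith [this]
  have hvw : (inner ℝ v u : ℝ) = a := (real_inner_comm v u).symm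
  have hwv : (inner ℝ w v : ℝ) = b := (real_inner_comm w v).symm
  have key : (c - a * b) ^ 2 ≤ (1 - a ^ 2) * (1 - b ^ 2) := by
    have h := real_inner_mul_inner_self_le (u - a • v) (w - b • v)
    simp only [inner_sub_left, inner_sub_right, real_inner_smul_left,
      real_inner_smul_right, huu, hvv, hww, hvw, hwv, ← hA, ← hB, ← hC] at h
    nlinarith [h]
  set x := Real.sqrt (1 - a ^ 2) with hx
  set y := Real.sqrt (1 - b ^ 2) with hy
  clear_value a b c
  have hx0 : 0 ≤ x := Real.sqrt_nonneg _
  have hy0 : 0 ≤ y := Real.sqrt_nonneg _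
  have hx2 : x ^ 2 = 1 - a ^ 2 := Real.sq_sqrt (by linarith)
  have hy2 : y ^ 2 = 1 - b ^ 2 := Real.sq_sqrt (by linarith)
  have hxy : (x * y) ^ 2 ≥ (c - a * b) ^ 2 := by
    rw [mul_pow, hx2, hy2]; exact key
  clear_value x y
  have habs : |c - a * b| ≤ x * y := by
    rw [← Real.sqrt_sq_eq_abs, ← Real.sqrt_sq (mul_nonneg hx0 hy0)]
    exact Real.sqrt_le_sqrt hxy
  obtain ⟨h2, h1⟩ := abs_le.mp habs
  have hab1 : a * b ≤ 1 := by nlinarith [sq_nonneg (a - b), ha, hb]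
  have hab1' : -1 ≤ a * b := by nlinarith [sq_nonneg (a + b), ha, hb]
  have hc1 : c ≤ 1 := by nlinarith [sq_nonneg (1 - c), hc]
  have hc1' : -1 ≤ c := by nlinarith [sq_nonneg (1 + c), hc]
  have hxy2 : x ^ 2 * y ^ 2 = (1 - a ^ 2) * (1 - b ^ 2) := by rw [hx2, hy2]
  have key2 : 2 * (x * y) ≥ a ^ 2 + b ^ 2 - 1 - c ^ 2 := by
    rcases le_or_gt 0 (a * b + c) with hp | hn
    · nlinarith [mul_nonneg (sub_nonneg.2 (show a * b - c ≤ x * y by linarith)) hp,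
        mul_nonneg (mul_nonneg hx0 hy0) (show (0:ℝ) ≤ 2 - (a * b + c) by linarith),
        hxy2, sq_nonneg (x * y)]
    · nlinarith [mul_nonneg (sub_nonneg.2 (show c - a * b ≤ x * y by linarith))
          (show (0:ℝ) ≤ -(a * b + c) by linarith),
        mul_nonneg (mul_nonneg hx0 hy0) (show (0:ℝ) ≤ 2 + (a * b + c) by linarith),
        hxy2, sq_nonneg (x * y)]
  have h1c : 1 - c ^ 2 ≤ (x + y) ^ 2 := by
    have hexp : (x + y) ^ 2 = x ^ 2 + y ^ 2 + 2 * (x * y) := by ring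
    rw [hexp, hx2, hy2]; linarith
  calc Real.sqrt (1 - c ^ 2) ≤ Real.sqrt ((x + y) ^ 2) := Real.sqrt_le_sqrt h1c
    _ = x + y := by rw [Real.sqrt_sq (by linarith)]
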